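/- Fix ω₀ > 0 and γ > 0. For each integer n ≥ 1 define M_{x,y} = Σ_{j,j'=0}^n Θ(μ_j, μ_{j'}) ψ_j(x) ψ_{j'}(x) ψ_j(y) ψ_{j'}(y) for x, y ∈ {0,…,n}, where Θ(c, c') = [1 + (c − c')²/(8γ²(c + c'))]^{−1}, μ_j = ω₀² + 4 sin²(π j/(2(n+1))), and ψ_j(x) = ((2 − δ_{0,j})/(n+1))^{1/2} cos(π j (2x+1)/(2(n+1))). Then there exists a constant c* > 0, independent of n, such that for every n ≥ 1 and every vector (f₀,…,f_n) ∈ ℝ^{n+1}: Σ_{x,y=0}^n (δ_{x,y} − M_{x,y}) f_x f_y ≥ c* Σ_{x=0}^{n−1} (f_{x+1} − f_x)². -/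

import Mathlib

open Real

noncomputable section

/-- The Neumann eigenvalues shifted by the pinning: `μ_j = ω₀² + 4 sin²(πj/(2(n+1)))`. -/
def muN (n : ℕ) (ω₀ : ℝ) (j : ℕ) : ℝ :=
  ω₀ ^ 2 + 4 * Real.sin (π * j / (2 * (n + 1))) ^ 2

/-- The Neumann eigenvectors `ψ_j(x) = ((2 − δ_{0,j})/(n+1))^{1/2} cos(πj(2x+1)/(2(n+1)))`. -/
def psiN (n j x : ℕ) : ℝ :=
  Real.sqrt ((2 - if j = 0 then 1 else 0) / (n + 1)) *
    Real.cos (π * j * (2 * x + 1) / (2 * (n + 1)))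

/-- `Θ(c, c') = [1 + (c − c')²/(8γ²(c + c'))]⁻¹`. -/
def thetaK (γ c c' : ℝ) : ℝ :=
  (1 + (c - c') ^ 2 / (8 * γ ^ 2 * (c + c')))⁻¹

/-- The kernel `M_{x,y} = Σ_{j,j'} Θ(μ_j, μ_{j'}) ψ_j(x) ψ_{j'}(x) ψ_j(y) ψ_{j'}(y)`. -/
def kerM (n : ℕ) (ω₀ γ : ℝ) (x y : ℕ) : ℝ :=
  ∑ j ∈ Finset.range (n + 1), ∑ j' ∈ Finset.range (n + 1),
    thetaK γ (muN n ω₀ j) (muN n ω₀ j') * psiN n j x * psiN n j' x * psiN n j y * psiN n j' y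

/-! ### Trigonometric sum lemmas -/

lemma cos_sum_telescope (t : ℝ) (N : ℕ) :
    2 * Real.sin t * ∑ x ∈ Finset.range N, Real.cos ((2 * x + 1) * t)
      = Real.sin (2 * N * t) := by
  induction N with
  | zero => simp
  | succ m ih =>
    rw [Finset.sum_range_succ, mul_add, ih]
    have h1 := Real.sin_add ((2 * (m:ℝ) + 1) * t) t
    have h2 := Real.sin_sub ((2 * (m:ℝ) + 1) * t) t
    have e1 : (2 * ((m:ℝ) + 1)) * t = (2 * (m:ℝ) + 1) * t + t := by ring
    have e2 : (2 * (m:ℝ)) * t = (2 * (m:ℝ) + 1) * t - t := by ring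
    push_cast
    rw [e1, e2, h1, h2]
    ring

lemma cos_sum_zero {N : ℕ} (hN : 0 < N) (m : ℤ) (hm : m ≠ 0) (hm2 : |m| < 2 * N) :
    ∑ x ∈ Finset.range N, Real.cos ((2 * x + 1) * ((m : ℝ) * π / (2 * N))) = 0 := by
  set t : ℝ := (m : ℝ) * π / (2 * N) with ht
  have hNpos : (0:ℝ) < N := by exact_mod_cast hN
  have hsin2 : Real.sin (2 * N * t) = 0 := by
    have : 2 * (N:ℝ) * t = m * π := by rw [ht]; field_simp
    rw [this]; exact Real.sin_int_mul_pi m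
  have hst : Real.sin t ≠ 0 := by
    have habs : |t| < π := by
      rw [ht, abs_div, abs_mul, abs_of_pos Real.pi_pos]
      rw [div_lt_iff₀ (by positivity)]
      have : |(m:ℝ)| < 2 * N := by
        have := hm2
        push_cast [← Int.cast_abs] at *
        exact_mod_cast this
      have h2N : |(2 * (N:ℝ))| = 2 * N := abs_of_pos (by positivity)
      rw [h2N]
      nlinarith [Real.pi_pos]
    have htne : t ≠ 0 := by
      rw [ht]
      have : (m:ℝ) ≠ 0 := Int.cast_ne_zero.mpr hm
      positivity
    have h1 : -π < t := by cases abs_lt.mp habs; linarith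
    have h2 : t < π := by cases abs_lt.mp habs; linarith
    intro h
    exact htne ((Real.sin_eq_zero_iff_of_lt_of_lt h1 h2).mp h)
  have := cos_sum_telescope t N
  rw [hsin2] at this
  have h2s : 2 * Real.sin t ≠ 0 := by simpa using hst
  exact (mul_eq_zero.mp this).resolve_left h2s

/-! ### Orthonormality and completeness -/

lemma cos_orth (n : ℕ) {j k : ℕ} (hj : j < n + 1) (hk : k < n + 1) (hjk : j ≠ k) :
    ∑ x ∈ Finset.range (n + 1),
      Real.cos (π * j * (2 * x + 1) / (2 * (n + 1))) *
        Real.cos (π * k * (2 * x + 1) / (2 * (n + 1))) = 0 := by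
  have key : ∀ x : ℕ,
      Real.cos (π * j * (2 * x + 1) / (2 * (n + 1))) *
        Real.cos (π * k * (2 * x + 1) / (2 * (n + 1)))
      = (Real.cos ((2 * (x:ℝ) + 1) * ((((j:ℤ) - k : ℤ) : ℝ) * π / (2 * ((n+1 : ℕ):ℝ))))
        + Real.cos ((2 * (x:ℝ) + 1) * ((((j:ℤ) + k : ℤ) : ℝ) * π / (2 * ((n+1 : ℕ):ℝ))))) / 2 := by
    intro x
    have hadd := Real.cos_add (π * (j:ℝ) * (2 * x + 1) / (2 * ((n:ℝ) + 1)))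
      (π * (k:ℝ) * (2 * x + 1) / (2 * ((n:ℝ) + 1)))
    have hsub := Real.cos_sub (π * (j:ℝ) * (2 * x + 1) / (2 * ((n:ℝ) + 1)))
      (π * (k:ℝ) * (2 * x + 1) / (2 * ((n:ℝ) + 1)))
    have e1 : (2 * (x:ℝ) + 1) * ((((j:ℤ) + k : ℤ) : ℝ) * π / (2 * ((n+1 : ℕ):ℝ)))
        = π * (j:ℝ) * (2 * x + 1) / (2 * ((n:ℝ) + 1)) + π * (k:ℝ) * (2 * x + 1) / (2 * ((n:ℝ) + 1)) := by
      push_cast; ring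
    have e2 : (2 * (x:ℝ) + 1) * ((((j:ℤ) - k : ℤ) : ℝ) * π / (2 * ((n+1 : ℕ):ℝ)))
        = π * (j:ℝ) * (2 * x + 1) / (2 * ((n:ℝ) + 1)) - π * (k:ℝ) * (2 * x + 1) / (2 * ((n:ℝ) + 1)) := by
      push_cast; ring
    rw [e1, e2, hadd, hsub]; ring
  rw [Finset.sum_congr rfl (fun x _ => key x)]
  have h1 : ∑ x ∈ Finset.range (n + 1),
      Real.cos ((2 * (x:ℝ) + 1) * ((((j:ℤ) - k : ℤ) : ℝ) * π / (2 * ((n+1 : ℕ):ℝ)))) = 0 := by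
    apply cos_sum_zero (Nat.succ_pos n)
    · omega
    · have : ((j:ℤ) - k).natAbs < 2 * (n+1) := by omega
      rw [Int.abs_eq_natAbs]; exact_mod_cast this
  have h2 : ∑ x ∈ Finset.range (n + 1),
      Real.cos ((2 * (x:ℝ) + 1) * ((((j:ℤ) + k : ℤ) : ℝ) * π / (2 * ((n+1 : ℕ):ℝ)))) = 0 := by
    apply cos_sum_zero (Nat.succ_pos n)
    · omega
    · have : ((j:ℤ) + k).natAbs < 2 * (n+1) := by omega
      rw [Int.abs_eq_natAbs]; exact_mod_cast this
  simp only [← Finset.sum_div, Finset.sum_add_distrib, h1, h2]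
  norm_num

lemma psi_orthonormal (n : ℕ) {j k : ℕ} (hj : j < n + 1) (hk : k < n + 1) :
    ∑ x ∈ Finset.range (n + 1), psiN n j x * psiN n k x = if j = k then 1 else 0 := by
  by_cases hjk : j = k
  · subst hjk
    simp only [if_pos rfl]
    by_cases hj0 : j = 0
    · subst hj0
      simp only [psiN, if_pos rfl, Nat.cast_zero]
      have : ∀ x : ℕ, π * 0 * (2 * (x:ℝ) + 1) / (2 * ((n:ℝ) + 1)) = 0 := by intro x; ring
      simp only [this, Real.cos_zero, mul_one]
      rw [Finset.sum_const, Finset.card_range]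
      simp only [if_true]
      rw [Real.mul_self_sqrt (by positivity), nsmul_eq_mul]
      push_cast
      rw [show (2:ℝ) - 1 = 1 by norm_num]
      field_simp
    · simp only [psiN, if_neg hj0]
      have hs : Real.sqrt ((2 - 0) / ((n:ℝ) + 1)) * Real.sqrt ((2 - 0) / ((n:ℝ) + 1))
          = 2 / ((n:ℝ) + 1) := by rw [Real.mul_self_sqrt (by positivity)]; norm_num
      have key : ∀ x : ℕ,
          (Real.sqrt ((2 - 0) / ((n:ℝ) + 1)) * Real.cos (π * j * (2 * x + 1) / (2 * ((n:ℝ) + 1)))) *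
          (Real.sqrt ((2 - 0) / ((n:ℝ) + 1)) * Real.cos (π * j * (2 * x + 1) / (2 * ((n:ℝ) + 1))))
          = 2 / ((n:ℝ) + 1) * (1/2 + Real.cos ((2 * (x:ℝ) + 1) * ((((2*j:ℕ):ℤ) : ℝ) * π / (2 * ((n+1 : ℕ):ℝ)))) / 2) := by
        intro x
        have hcs := Real.cos_sq (π * (j:ℝ) * (2 * x + 1) / (2 * ((n:ℝ) + 1)))
        have e1 : (2 * (x:ℝ) + 1) * ((((2*j:ℕ):ℤ) : ℝ) * π / (2 * ((n+1 : ℕ):ℝ)))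
            = 2 * (π * (j:ℝ) * (2 * x + 1) / (2 * ((n:ℝ) + 1))) := by push_cast; ring
        rw [e1]
        nlinarith [hcs, hs]
      rw [Finset.sum_congr rfl (fun x _ => key x)]
      rw [← Finset.mul_sum]
      have h0 : ∑ x ∈ Finset.range (n + 1),
          Real.cos ((2 * (x:ℝ) + 1) * ((((2*j:ℕ):ℤ) : ℝ) * π / (2 * ((n+1 : ℕ):ℝ)))) = 0 := by
        apply cos_sum_zero (Nat.succ_pos n)
        · simp; omega
        · simp only [Int.natCast_mul]
          rw [abs_of_nonneg (by positivity)]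
          push_cast; omega
      rw [Finset.sum_add_distrib]
      simp only [← Finset.sum_div]
      rw [h0, Finset.sum_const, Finset.card_range, nsmul_eq_mul]
      push_cast
      field_simp
      ring
  · simp only [if_neg hjk, psiN]
    have : ∀ x : ℕ,
        Real.sqrt ((2 - if j = 0 then 1 else 0) / ((n:ℝ) + 1)) * Real.cos (π * j * (2 * x + 1) / (2 * ((n:ℝ) + 1))) *
        (Real.sqrt ((2 - if k = 0 then 1 else 0) / ((n:ℝ) + 1)) * Real.cos (π * k * (2 * x + 1) / (2 * ((n:ℝ) + 1))))
        = (Real.sqrt ((2 - if j = 0 then 1 else 0) / ((n:ℝ) + 1)) * Real.sqrt ((2 - if k = 0 then 1 else 0) / ((n:ℝ) + 1)))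
          * (Real.cos (π * j * (2 * x + 1) / (2 * ((n:ℝ) + 1))) * Real.cos (π * k * (2 * x + 1) / (2 * ((n:ℝ) + 1)))) := by
      intro x; ring
    rw [Finset.sum_congr rfl (fun x _ => this x), ← Finset.mul_sum, cos_orth n hj hk hjk, mul_zero]

lemma psi_complete (n : ℕ) {x y : ℕ} (hx : x < n + 1) (hy : y < n + 1) :
    ∑ j ∈ Finset.range (n + 1), psiN n j x * psiN n j y = if x = y then 1 else 0 := by
  set P : Matrix (Fin (n+1)) (Fin (n+1)) ℝ := Matrix.of (fun j x : Fin (n+1) => psiN n j x) with hP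
  have h1 : P * P.transpose = 1 := by
    ext j k
    simp only [Matrix.mul_apply, Matrix.transpose_apply, Matrix.one_apply, hP, Matrix.of_apply]
    rw [Fin.sum_univ_eq_sum_range (fun x => psiN n j x * psiN n k x)]
    rw [psi_orthonormal n j.isLt k.isLt]
    simp [Fin.ext_iff]
  have h2 : P.transpose * P = 1 := mul_eq_one_comm.mp h1
  have h3 := congrFun (congrFun h2 ⟨x, hx⟩) ⟨y, hy⟩
  simp only [Matrix.mul_apply, Matrix.transpose_apply, Matrix.one_apply, hP, Matrix.of_apply] at h3
  rw [Fin.sum_univ_eq_sum_range (fun j => psiN n j x * psiN n j y)] at h3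
  rw [h3]
  simp [Fin.ext_iff]

/-! ### Eigenvalue / commutator identities -/

lemma trig_step (a b u v : ℝ) :
    (4 * Real.sin b ^ 2 - 4 * Real.sin a ^ 2) * (Real.cos u * Real.cos v)
    = (Real.cos (u + 2 * a) * Real.cos v - Real.cos u * Real.cos (v + 2 * b))
      - (Real.cos u * Real.cos (v - 2 * b) - Real.cos (u - 2 * a) * Real.cos v) := by
  rw [Real.cos_add, Real.cos_sub, Real.cos_add, Real.cos_sub,
    Real.cos_two_mul' a, Real.cos_two_mul' b]
  linear_combination 2 * Real.cos u * Real.cos v * (Real.sin_sq_add_cos_sq b)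
    - 2 * Real.cos u * Real.cos v * (Real.sin_sq_add_cos_sq a)

lemma eigen_step (n : ℕ) (ω₀ : ℝ) (j j' x : ℕ) :
    (muN n ω₀ j' - muN n ω₀ j) * (psiN n j (x + 1) * psiN n j' (x + 1))
    = (psiN n j (x + 2) * psiN n j' (x + 1) - psiN n j (x + 1) * psiN n j' (x + 2))
      - (psiN n j (x + 1) * psiN n j' x - psiN n j x * psiN n j' (x + 1)) := by
  simp only [muN, psiN]
  push_cast
  set s := Real.sqrt ((2 - if j = 0 then 1 else 0) / ((n : ℝ) + 1))
  set s' := Real.sqrt ((2 - if j' = 0 then 1 else 0) / ((n : ℝ) + 1))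
  set a := π * (j : ℝ) / (2 * ((n : ℝ) + 1)) with ha
  set b := π * (j' : ℝ) / (2 * ((n : ℝ) + 1)) with hb
  set u := π * (j : ℝ) * (2 * ((x : ℝ) + 1) + 1) / (2 * ((n : ℝ) + 1)) with hu
  set v := π * (j' : ℝ) * (2 * ((x : ℝ) + 1) + 1) / (2 * ((n : ℝ) + 1)) with hv
  have e1 : π * (j : ℝ) * (2 * ((x : ℝ) + 2) + 1) / (2 * ((n : ℝ) + 1)) = u + 2 * a := by
    rw [hu, ha]; ring
  have e2 : π * (j' : ℝ) * (2 * ((x : ℝ) + 2) + 1) / (2 * ((n : ℝ) + 1)) = v + 2 * b := by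
    rw [hv, hb]; ring
  have e3 : π * (j : ℝ) * (2 * (x : ℝ) + 1) / (2 * ((n : ℝ) + 1)) = u - 2 * a := by
    rw [hu, ha]; ring
  have e4 : π * (j' : ℝ) * (2 * (x : ℝ) + 1) / (2 * ((n : ℝ) + 1)) = v - 2 * b := by
    rw [hv, hb]; ring
  rw [e1, e2, e3, e4]
  linear_combination (s * s') * trig_step a b u v

lemma eigen_zero (n : ℕ) (ω₀ : ℝ) (j j' : ℕ) :
    (muN n ω₀ j' - muN n ω₀ j) * (psiN n j 0 * psiN n j' 0)
    = psiN n j 1 * psiN n j' 0 - psiN n j 0 * psiN n j' 1 := by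
  simp only [muN, psiN]
  push_cast
  set s := Real.sqrt ((2 - if j = 0 then 1 else 0) / ((n : ℝ) + 1))
  set s' := Real.sqrt ((2 - if j' = 0 then 1 else 0) / ((n : ℝ) + 1))
  set a := π * (j : ℝ) / (2 * ((n : ℝ) + 1)) with ha
  set b := π * (j' : ℝ) / (2 * ((n : ℝ) + 1)) with hb
  have e0 : π * (j : ℝ) * (2 * (0 : ℝ) + 1) / (2 * ((n : ℝ) + 1)) = a := by rw [ha]; ring
  have e0' : π * (j' : ℝ) * (2 * (0 : ℝ) + 1) / (2 * ((n : ℝ) + 1)) = b := by rw [hb]; ring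
  have e1 : π * (j : ℝ) * (2 * (1 : ℝ) + 1) / (2 * ((n : ℝ) + 1)) = a + 2 * a := by rw [ha]; ring
  have e1' : π * (j' : ℝ) * (2 * (1 : ℝ) + 1) / (2 * ((n : ℝ) + 1)) = b + 2 * b := by rw [hb]; ring
  rw [e0, e0', e1, e1', Real.cos_add, Real.cos_add, Real.cos_two_mul' a, Real.cos_two_mul' b,
    Real.sin_two_mul, Real.sin_two_mul]
  linear_combination s * s' * Real.cos a * Real.cos b * (Real.sin_sq_add_cos_sq b)
    - s * s' * Real.cos a * Real.cos b * (Real.sin_sq_add_cos_sq a)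

lemma W_boundary (n : ℕ) (j j' : ℕ) :
    psiN n j (n + 1) * psiN n j' n - psiN n j n * psiN n j' (n + 1) = 0 := by
  simp only [psiN]
  push_cast
  have hne : 2 * ((n : ℝ) + 1) ≠ 0 := by positivity
  have e1 : π * (j : ℝ) * (2 * ((n : ℝ) + 1) + 1) / (2 * ((n : ℝ) + 1))
      = π * (j : ℝ) + π * (j : ℝ) / (2 * ((n : ℝ) + 1)) := by field_simp
  have e2 : π * (j : ℝ) * (2 * (n : ℝ) + 1) / (2 * ((n : ℝ) + 1))
      = π * (j : ℝ) - π * (j : ℝ) / (2 * ((n : ℝ) + 1)) := by field_simp; ring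
  have e1' : π * (j' : ℝ) * (2 * ((n : ℝ) + 1) + 1) / (2 * ((n : ℝ) + 1))
      = π * (j' : ℝ) + π * (j' : ℝ) / (2 * ((n : ℝ) + 1)) := by field_simp
  have e2' : π * (j' : ℝ) * (2 * (n : ℝ) + 1) / (2 * ((n : ℝ) + 1))
      = π * (j' : ℝ) - π * (j' : ℝ) / (2 * ((n : ℝ) + 1)) := by field_simp; ring
  have hsj : Real.sin (π * (j : ℝ)) = 0 := by rw [mul_comm]; exact Real.sin_nat_mul_pi j
  have hsj' : Real.sin (π * (j' : ℝ)) = 0 := by rw [mul_comm]; exact Real.sin_nat_mul_pi j'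
  rw [e1, e2, e1', e2', Real.cos_add, Real.cos_sub, Real.cos_add, Real.cos_sub, hsj, hsj']
  ring

lemma comm_identity (n : ℕ) (ω₀ : ℝ) (f : ℕ → ℝ) (j j' : ℕ) :
    (muN n ω₀ j' - muN n ω₀ j) *
      (∑ x ∈ Finset.range (n + 1), psiN n j x * psiN n j' x * f x)
    = - ∑ x ∈ Finset.range n, (f (x + 1) - f x) *
        (psiN n j (x + 1) * psiN n j' x - psiN n j x * psiN n j' (x + 1)) := by
  set W : ℕ → ℝ := fun x => psiN n j (x + 1) * psiN n j' x - psiN n j x * psiN n j' (x + 1)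
    with hW
  have h0 : (muN n ω₀ j' - muN n ω₀ j) *
      (∑ x ∈ Finset.range (n + 1), psiN n j x * psiN n j' x * f x)
      = ∑ x ∈ Finset.range (n + 1),
          f x * ((muN n ω₀ j' - muN n ω₀ j) * (psiN n j x * psiN n j' x)) := by
    rw [Finset.mul_sum]; exact Finset.sum_congr rfl fun x _ => by ring
  rw [h0, Finset.sum_range_succ']
  have hz : f 0 * ((muN n ω₀ j' - muN n ω₀ j) * (psiN n j 0 * psiN n j' 0)) = f 0 * W 0 := by
    rw [eigen_zero]
  have hs : ∀ x : ℕ,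
      f (x + 1) * ((muN n ω₀ j' - muN n ω₀ j) * (psiN n j (x + 1) * psiN n j' (x + 1)))
      = f (x + 1) * (W (x + 1) - W x) := by
    intro x
    rw [eigen_step]
  rw [Finset.sum_congr rfl fun x _ => hs x, hz]
  have hA := Finset.sum_range_succ' (fun x => f x * W x) n
  have hB := Finset.sum_range_succ (fun x => f x * W x) n
  have hWn : W n = 0 := W_boundary n j j'
  have e1 : ∑ x ∈ Finset.range n, f (x + 1) * (W (x + 1) - W x)
      = ∑ x ∈ Finset.range n, f (x + 1) * W (x + 1) - ∑ x ∈ Finset.range n, f (x + 1) * W x := by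
    rw [← Finset.sum_sub_distrib]; exact Finset.sum_congr rfl fun x _ => by ring
  have e2 : - ∑ x ∈ Finset.range n, (f (x + 1) - f x) * W x
      = ∑ x ∈ Finset.range n, f x * W x - ∑ x ∈ Finset.range n, f (x + 1) * W x := by
    rw [← Finset.sum_sub_distrib, ← Finset.sum_neg_distrib]
    exact Finset.sum_congr rfl fun x _ => by ring
  rw [e1, e2]
  rw [hWn] at hB
  linarith [hA, hB]

/-! ### Sum rearrangement lemmas -/

lemma fubini4 (s t u v : Finset ℕ) (F : ℕ → ℕ → ℕ → ℕ → ℝ) :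
    ∑ j ∈ s, ∑ j' ∈ t, ∑ p ∈ u, ∑ q ∈ v, F j j' p q
      = ∑ p ∈ u, ∑ q ∈ v, ∑ j ∈ s, ∑ j' ∈ t, F j j' p q := by
  calc ∑ j ∈ s, ∑ j' ∈ t, ∑ p ∈ u, ∑ q ∈ v, F j j' p q
      = ∑ j ∈ s, ∑ p ∈ u, ∑ j' ∈ t, ∑ q ∈ v, F j j' p q :=
        Finset.sum_congr rfl fun j _ => Finset.sum_comm
    _ = ∑ p ∈ u, ∑ j ∈ s, ∑ j' ∈ t, ∑ q ∈ v, F j j' p q := Finset.sum_comm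
    _ = ∑ p ∈ u, ∑ j ∈ s, ∑ q ∈ v, ∑ j' ∈ t, F j j' p q :=
        Finset.sum_congr rfl fun p _ => Finset.sum_congr rfl fun j _ => Finset.sum_comm
    _ = ∑ p ∈ u, ∑ q ∈ v, ∑ j ∈ s, ∑ j' ∈ t, F j j' p q :=
        Finset.sum_congr rfl fun p _ => Finset.sum_comm

lemma sum_factor (u v : Finset ℕ) (C : ℝ) (A B : ℕ → ℝ) :
    ∑ x ∈ u, ∑ y ∈ v, C * (A x * B y) = C * (∑ x ∈ u, A x) * (∑ y ∈ v, B y) := by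
  rw [mul_assoc, Finset.sum_mul_sum, Finset.mul_sum]
  exact Finset.sum_congr rfl fun x _ => by rw [Finset.mul_sum]

lemma parseval_gen (N m : ℕ) (ψ : ℕ → ℕ → ℝ) (c d : ℕ → ℝ) (φ χ φ' χ' : ℕ → ℕ) :
    ∑ j ∈ Finset.range N, ∑ j' ∈ Finset.range N,
      (∑ p ∈ Finset.range m, c p * ψ j (φ p) * ψ j' (χ p)) *
      (∑ q ∈ Finset.range m, d q * ψ j (φ' q) * ψ j' (χ' q))
    = ∑ p ∈ Finset.range m, ∑ q ∈ Finset.range m, (c p * d q) *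
        ((∑ j ∈ Finset.range N, ψ j (φ p) * ψ j (φ' q)) *
         (∑ j' ∈ Finset.range N, ψ j' (χ p) * ψ j' (χ' q))) := by
  have e1 : ∀ j j', (∑ p ∈ Finset.range m, c p * ψ j (φ p) * ψ j' (χ p)) *
      (∑ q ∈ Finset.range m, d q * ψ j (φ' q) * ψ j' (χ' q))
      = ∑ p ∈ Finset.range m, ∑ q ∈ Finset.range m,
          (c p * d q) * ((ψ j (φ p) * ψ j (φ' q)) * (ψ j' (χ p) * ψ j' (χ' q))) := by
    intro j j'
    rw [Finset.sum_mul_sum]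
    exact Finset.sum_congr rfl fun p _ => Finset.sum_congr rfl fun q _ => by ring
  rw [Finset.sum_congr rfl fun j _ => Finset.sum_congr rfl fun j' (_ : j' ∈ Finset.range N) => e1 j j']
  rw [fubini4]
  refine Finset.sum_congr rfl fun p _ => Finset.sum_congr rfl fun q _ => ?_
  rw [sum_factor (Finset.range N) (Finset.range N) (c p * d q)
    (fun j => ψ j (φ p) * ψ j (φ' q)) (fun j' => ψ j' (χ p) * ψ j' (χ' q))]
  ring

lemma quad_expand (N : ℕ) (θ ψ : ℕ → ℕ → ℝ) (f : ℕ → ℝ) :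
    ∑ x ∈ Finset.range N, ∑ y ∈ Finset.range N,
      (∑ j ∈ Finset.range N, ∑ j' ∈ Finset.range N,
        θ j j' * ψ j x * ψ j' x * ψ j y * ψ j' y) * f x * f y
    = ∑ j ∈ Finset.range N, ∑ j' ∈ Finset.range N,
        θ j j' * (∑ x ∈ Finset.range N, ψ j x * ψ j' x * f x) ^ 2 := by
  have e1 : ∀ x y, (∑ j ∈ Finset.range N, ∑ j' ∈ Finset.range N,
      θ j j' * ψ j x * ψ j' x * ψ j y * ψ j' y) * f x * f y
      = ∑ j ∈ Finset.range N, ∑ j' ∈ Finset.range N,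
          θ j j' * ((ψ j x * ψ j' x * f x) * (ψ j y * ψ j' y * f y)) := by
    intro x y
    rw [Finset.sum_mul, Finset.sum_mul]
    refine Finset.sum_congr rfl fun j _ => ?_
    rw [Finset.sum_mul, Finset.sum_mul]
    exact Finset.sum_congr rfl fun j' _ => by ring
  rw [Finset.sum_congr rfl fun x _ => Finset.sum_congr rfl fun y (_ : y ∈ Finset.range N) => e1 x y]
  rw [fubini4]
  refine Finset.sum_congr rfl fun j _ => Finset.sum_congr rfl fun j' _ => ?_
  rw [sum_factor (Finset.range N) (Finset.range N) (θ j j')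
    (fun x => ψ j x * ψ j' x * f x) (fun y => ψ j y * ψ j' y * f y)]
  rw [sq]
  ring

lemma parseval_psi (n m : ℕ) (c d : ℕ → ℝ) (φ χ φ' χ' : ℕ → ℕ)
    (hφ : ∀ p < m, φ p < n + 1) (hχ : ∀ p < m, χ p < n + 1)
    (hφ' : ∀ p < m, φ' p < n + 1) (hχ' : ∀ p < m, χ' p < n + 1) :
    ∑ j ∈ Finset.range (n + 1), ∑ j' ∈ Finset.range (n + 1),
      (∑ p ∈ Finset.range m, c p * psiN n j (φ p) * psiN n j' (χ p)) *
      (∑ q ∈ Finset.range m, d q * psiN n j (φ' q) * psiN n j' (χ' q))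
    = ∑ p ∈ Finset.range m, ∑ q ∈ Finset.range m, (c p * d q) *
        ((if φ p = φ' q then (1:ℝ) else 0) * (if χ p = χ' q then (1:ℝ) else 0)) := by
  rw [parseval_gen (n + 1) m (fun j x => psiN n j x) c d φ χ φ' χ']
  refine Finset.sum_congr rfl fun p hp => Finset.sum_congr rfl fun q hq => ?_
  rw [psi_complete n (hφ p (Finset.mem_range.mp hp)) (hφ' q (Finset.mem_range.mp hq)),
    psi_complete n (hχ p (Finset.mem_range.mp hp)) (hχ' q (Finset.mem_range.mp hq))]

lemma eval_diag (m : ℕ) (c d : ℕ → ℝ) (u u' v v' : ℕ → ℕ)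
    (h : ∀ p q, (u p = u' q ∧ v p = v' q) ↔ p = q) :
    ∑ p ∈ Finset.range m, ∑ q ∈ Finset.range m, (c p * d q) *
      ((if u p = u' q then (1:ℝ) else 0) * (if v p = v' q then (1:ℝ) else 0))
    = ∑ p ∈ Finset.range m, c p * d p := by
  refine Finset.sum_congr rfl fun p hp => ?_
  have key : ∀ q ∈ Finset.range m, (c p * d q) *
      ((if u p = u' q then (1:ℝ) else 0) * (if v p = v' q then (1:ℝ) else 0))
      = if p = q then c p * d q else 0 := by
    intro q _
    by_cases hpq : p = q
    · have hh := (h p q).mpr hpq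
      rw [if_pos hh.1, if_pos hh.2, if_pos hpq]
      norm_num
    · have hh : ¬(u p = u' q ∧ v p = v' q) := fun hc => hpq ((h p q).mp hc)
      rw [if_neg hpq]
      by_cases h1 : u p = u' q
      · have h2 : ¬(v p = v' q) := fun hc => hh ⟨h1, hc⟩
        simp [h1, h2]
      · simp [h1]
  rw [Finset.sum_congr rfl key, Finset.sum_ite_eq, if_pos hp]

lemma eval_zero (m : ℕ) (c d : ℕ → ℝ) (u u' v v' : ℕ → ℕ)
    (h : ∀ p q, ¬(u p = u' q ∧ v p = v' q)) :
    ∑ p ∈ Finset.range m, ∑ q ∈ Finset.range m, (c p * d q) *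
      ((if u p = u' q then (1:ℝ) else 0) * (if v p = v' q then (1:ℝ) else 0))
    = 0 := by
  refine Finset.sum_eq_zero fun p _ => Finset.sum_eq_zero fun q _ => ?_
  by_cases h1 : u p = u' q
  · have h2 : ¬(v p = v' q) := fun hc => h p q ⟨h1, hc⟩
    simp [h1, h2]
  · simp [h1]

lemma one_sub_theta_ge (γ ω₀ c c' : ℝ) (hγ : 0 < γ) (hω : 0 < ω₀)
    (h1 : ω₀ ^ 2 ≤ c) (h2 : c ≤ ω₀ ^ 2 + 4) (h3 : ω₀ ^ 2 ≤ c') (h4 : c' ≤ ω₀ ^ 2 + 4) :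
    (c - c') ^ 2 / (8 * γ ^ 2 * (2 * ω₀ ^ 2 + 8) + 16)
      ≤ 1 - (1 + (c - c') ^ 2 / (8 * γ ^ 2 * (c + c')))⁻¹ := by
  have hS : 0 < c + c' := by nlinarith
  have hE : 0 < 8 * γ ^ 2 * (c + c') := by positivity
  have heq : 1 - (1 + (c - c') ^ 2 / (8 * γ ^ 2 * (c + c')))⁻¹
      = (c - c') ^ 2 / (8 * γ ^ 2 * (c + c') + (c - c') ^ 2) := by
    rw [eq_div_iff (by positivity)]
    field_simp
    ring
  rw [heq]
  apply div_le_div_of_nonneg_left (sq_nonneg _) (by positivity)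
  · nlinarith [sq_nonneg (c - c'), sq_nonneg γ]

lemma muN_lb (n : ℕ) (ω₀ : ℝ) (j : ℕ) : ω₀ ^ 2 ≤ muN n ω₀ j := by
  have := sq_nonneg (Real.sin (π * j / (2 * ((n:ℝ) + 1))))
  simp only [muN]; nlinarith

lemma muN_ub (n : ℕ) (ω₀ : ℝ) (j : ℕ) : muN n ω₀ j ≤ ω₀ ^ 2 + 4 := by
  have := Real.sin_sq_le_one (π * j / (2 * ((n:ℝ) + 1)))
  simp only [muN]; nlinarith

/-- Uniform coercivity of `Id − M`: there is `c* > 0`, independent of `n`,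
with `Σ_{x,y} (δ_{x,y} − M_{x,y}) f_x f_y ≥ c* Σ_x (f_{x+1} − f_x)²` for every `f ∈ ℝ^{n+1}`. -/
theorem kerM_coercivity (ω₀ γ : ℝ) (hω : 0 < ω₀) (hγ : 0 < γ) :
    ∃ c > 0, ∀ n : ℕ, 1 ≤ n → ∀ f : ℕ → ℝ,
      c * ∑ x ∈ Finset.range n, (f (x + 1) - f x) ^ 2 ≤
        ∑ x ∈ Finset.range (n + 1), ∑ y ∈ Finset.range (n + 1),
          ((if x = y then 1 else 0) - kerM n ω₀ γ x y) * f x * f y := by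
  set CC : ℝ := 8 * γ ^ 2 * (2 * ω₀ ^ 2 + 8) + 16 with hCC
  have hCCpos : 0 < CC := by positivity
  refine ⟨2 * CC⁻¹, by positivity, ?_⟩
  intro n hn f
  set μ : ℕ → ℝ := muN n ω₀ with hμ
  -- Step A: the quadratic form equals ∑ (1 - θ) a².
  have hsplit : ∑ x ∈ Finset.range (n + 1), ∑ y ∈ Finset.range (n + 1),
      ((if x = y then 1 else 0) - kerM n ω₀ γ x y) * f x * f y
      = (∑ x ∈ Finset.range (n + 1), ∑ y ∈ Finset.range (n + 1),
          (if x = y then (1:ℝ) else 0) * f x * f y)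
        - ∑ x ∈ Finset.range (n + 1), ∑ y ∈ Finset.range (n + 1),
            kerM n ω₀ γ x y * f x * f y := by
    rw [← Finset.sum_sub_distrib]
    refine Finset.sum_congr rfl fun x _ => ?_
    rw [← Finset.sum_sub_distrib]
    exact Finset.sum_congr rfl fun y _ => by ring
  have hdiag : ∑ x ∈ Finset.range (n + 1), ∑ y ∈ Finset.range (n + 1),
      (if x = y then (1:ℝ) else 0) * f x * f y
      = ∑ x ∈ Finset.range (n + 1), f x ^ 2 := by
    refine Finset.sum_congr rfl fun x hx => ?_
    have key : ∀ y ∈ Finset.range (n + 1),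
        (if x = y then (1:ℝ) else 0) * f x * f y = if x = y then f x * f y else 0 := by
      intro y _; by_cases h : x = y <;> simp [h]
    rw [Finset.sum_congr rfl key, Finset.sum_ite_eq, if_pos hx, sq]
  have hM : ∑ x ∈ Finset.range (n + 1), ∑ y ∈ Finset.range (n + 1),
      kerM n ω₀ γ x y * f x * f y
      = ∑ j ∈ Finset.range (n + 1), ∑ j' ∈ Finset.range (n + 1),
          thetaK γ (μ j) (μ j') *
            (∑ x ∈ Finset.range (n + 1), psiN n j x * psiN n j' x * f x) ^ 2 := by
    simp only [kerM, hμ]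
    exact quad_expand (n + 1) (fun j j' => thetaK γ (muN n ω₀ j) (muN n ω₀ j'))
      (fun j x => psiN n j x) f
  have hpars : ∑ x ∈ Finset.range (n + 1), f x ^ 2
      = ∑ j ∈ Finset.range (n + 1), ∑ j' ∈ Finset.range (n + 1),
          (∑ x ∈ Finset.range (n + 1), psiN n j x * psiN n j' x * f x) ^ 2 := by
    have e1 : ∀ j ∈ Finset.range (n + 1), ∀ j' ∈ Finset.range (n + 1),
        (∑ x ∈ Finset.range (n + 1), psiN n j x * psiN n j' x * f x) ^ 2
        = (∑ p ∈ Finset.range (n + 1), f p * psiN n j p * psiN n j' p) *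
          (∑ q ∈ Finset.range (n + 1), f q * psiN n j q * psiN n j' q) := by
      intro j _ j' _
      rw [sq]
      have : ∑ x ∈ Finset.range (n + 1), psiN n j x * psiN n j' x * f x
          = ∑ x ∈ Finset.range (n + 1), f x * psiN n j x * psiN n j' x :=
        Finset.sum_congr rfl fun x _ => by ring
      rw [this]
    rw [Finset.sum_congr rfl fun j hj => Finset.sum_congr rfl fun j' hj' => e1 j hj j' hj']
    have P0 := parseval_psi n (n + 1) f f (fun p => p) (fun p => p) (fun p => p) (fun p => p)
      (fun p hp => by show p < n + 1; omega) (fun p hp => by show p < n + 1; omega)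
      (fun p hp => by show p < n + 1; omega) (fun p hp => by show p < n + 1; omega)
    have E0 := eval_diag (n + 1) f f (fun p => p) (fun p => p) (fun p => p) (fun p => p)
      (fun p q => by show (p = q ∧ p = q) ↔ p = q; tauto)
    simp only [] at P0 E0
    rw [P0, E0]
    exact Finset.sum_congr rfl fun p _ => pow_two (f p)
  have hA : ∑ x ∈ Finset.range (n + 1), ∑ y ∈ Finset.range (n + 1),
      ((if x = y then 1 else 0) - kerM n ω₀ γ x y) * f x * f y
      = ∑ j ∈ Finset.range (n + 1), ∑ j' ∈ Finset.range (n + 1),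
          (1 - thetaK γ (μ j) (μ j')) *
            (∑ x ∈ Finset.range (n + 1), psiN n j x * psiN n j' x * f x) ^ 2 := by
    rw [hsplit, hdiag, hM, hpars, ← Finset.sum_sub_distrib]
    refine Finset.sum_congr rfl fun j _ => ?_
    rw [← Finset.sum_sub_distrib]
    exact Finset.sum_congr rfl fun j' _ => by ring
  -- Step B: per-term lower bound.
  have hB : ∀ j j', CC⁻¹ * ((μ j - μ j') *
        (∑ x ∈ Finset.range (n + 1), psiN n j x * psiN n j' x * f x)) ^ 2
      ≤ (1 - thetaK γ (μ j) (μ j')) *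
        (∑ x ∈ Finset.range (n + 1), psiN n j x * psiN n j' x * f x) ^ 2 := by
    intro j j'
    have h1 := one_sub_theta_ge γ ω₀ (μ j) (μ j') hγ hω (muN_lb n ω₀ j) (muN_ub n ω₀ j)
      (muN_lb n ω₀ j') (muN_ub n ω₀ j')
    have h2 : (μ j - μ j') ^ 2 / CC ≤ 1 - thetaK γ (μ j) (μ j') := by
      rw [thetaK, hCC]; exact h1
    calc CC⁻¹ * ((μ j - μ j') *
          (∑ x ∈ Finset.range (n + 1), psiN n j x * psiN n j' x * f x)) ^ 2
        = ((μ j - μ j') ^ 2 / CC) *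
          (∑ x ∈ Finset.range (n + 1), psiN n j x * psiN n j' x * f x) ^ 2 := by
          rw [mul_pow]; ring
      _ ≤ (1 - thetaK γ (μ j) (μ j')) *
          (∑ x ∈ Finset.range (n + 1), psiN n j x * psiN n j' x * f x) ^ 2 :=
          mul_le_mul_of_nonneg_right h2 (sq_nonneg _)
  -- Step C: commutator identity.
  have hC : ∀ j j', ((μ j - μ j') *
        (∑ x ∈ Finset.range (n + 1), psiN n j x * psiN n j' x * f x)) ^ 2
      = (∑ x ∈ Finset.range n, (f (x + 1) - f x) *
          (psiN n j (x + 1) * psiN n j' x - psiN n j x * psiN n j' (x + 1))) ^ 2 := by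
    intro j j'
    have h := comm_identity n ω₀ f j j'
    have h2 : (μ j - μ j') * (∑ x ∈ Finset.range (n + 1), psiN n j x * psiN n j' x * f x)
        = ∑ x ∈ Finset.range n, (f (x + 1) - f x) *
            (psiN n j (x + 1) * psiN n j' x - psiN n j x * psiN n j' (x + 1)) := by
      rw [hμ]
      linear_combination -h
    rw [h2]
  -- Step D: Parseval for the gradient.
  have hD : ∑ j ∈ Finset.range (n + 1), ∑ j' ∈ Finset.range (n + 1),
      (∑ x ∈ Finset.range n, (f (x + 1) - f x) *
        (psiN n j (x + 1) * psiN n j' x - psiN n j x * psiN n j' (x + 1))) ^ 2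
      = 2 * ∑ x ∈ Finset.range n, (f (x + 1) - f x) ^ 2 := by
    set g : ℕ → ℝ := fun x => f (x + 1) - f x with hg
    have e1 : ∀ j ∈ Finset.range (n + 1), ∀ j' ∈ Finset.range (n + 1),
        (∑ x ∈ Finset.range n, g x *
          (psiN n j (x + 1) * psiN n j' x - psiN n j x * psiN n j' (x + 1))) ^ 2
        = (∑ p ∈ Finset.range n, g p * psiN n j (p + 1) * psiN n j' p) *
            (∑ q ∈ Finset.range n, g q * psiN n j (q + 1) * psiN n j' q)
          - (∑ p ∈ Finset.range n, g p * psiN n j (p + 1) * psiN n j' p) *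
            (∑ q ∈ Finset.range n, g q * psiN n j q * psiN n j' (q + 1))
          - ((∑ p ∈ Finset.range n, g p * psiN n j p * psiN n j' (p + 1)) *
              (∑ q ∈ Finset.range n, g q * psiN n j (q + 1) * psiN n j' q)
            - (∑ p ∈ Finset.range n, g p * psiN n j p * psiN n j' (p + 1)) *
              (∑ q ∈ Finset.range n, g q * psiN n j q * psiN n j' (q + 1))) := by
      intro j _ j' _
      have hsplit2 : ∑ x ∈ Finset.range n, g x *
            (psiN n j (x + 1) * psiN n j' x - psiN n j x * psiN n j' (x + 1))
          = (∑ p ∈ Finset.range n, g p * psiN n j (p + 1) * psiN n j' p)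
            - ∑ p ∈ Finset.range n, g p * psiN n j p * psiN n j' (p + 1) := by
        rw [← Finset.sum_sub_distrib]
        exact Finset.sum_congr rfl fun x _ => by ring
      rw [hsplit2]; ring
    rw [Finset.sum_congr rfl fun j hj => Finset.sum_congr rfl fun j' hj' => e1 j hj j' hj']
    simp only [Finset.sum_sub_distrib]
    have hlt : ∀ p : ℕ, p < n → p + 1 < n + 1 := by omega
    have hlt2 : ∀ p : ℕ, p < n → p < n + 1 := by omega
    have P1 := parseval_psi n n g g (fun p => p + 1) (fun p => p) (fun p => p + 1) (fun p => p)
      (fun p hp => by show p + 1 < n + 1; omega) (fun p hp => by show p < n + 1; omega)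
      (fun p hp => by show p + 1 < n + 1; omega) (fun p hp => by show p < n + 1; omega)
    have P2 := parseval_psi n n g g (fun p => p + 1) (fun p => p) (fun p => p) (fun p => p + 1)
      (fun p hp => by show p + 1 < n + 1; omega) (fun p hp => by show p < n + 1; omega)
      (fun p hp => by show p < n + 1; omega) (fun p hp => by show p + 1 < n + 1; omega)
    have P3 := parseval_psi n n g g (fun p => p) (fun p => p + 1) (fun p => p + 1) (fun p => p)
      (fun p hp => by show p < n + 1; omega) (fun p hp => by show p + 1 < n + 1; omega)
      (fun p hp => by show p + 1 < n + 1; omega) (fun p hp => by show p < n + 1; omega)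
    have P4 := parseval_psi n n g g (fun p => p) (fun p => p + 1) (fun p => p) (fun p => p + 1)
      (fun p hp => by show p < n + 1; omega) (fun p hp => by show p + 1 < n + 1; omega)
      (fun p hp => by show p < n + 1; omega) (fun p hp => by show p + 1 < n + 1; omega)
    have E1 := eval_diag n g g (fun p => p + 1) (fun p => p + 1) (fun p => p) (fun p => p)
      (fun p q => by show (p + 1 = q + 1 ∧ p = q) ↔ p = q; omega)
    have E2 := eval_zero n g g (fun p => p + 1) (fun p => p) (fun p => p) (fun p => p + 1)
      (fun p q => by show ¬(p + 1 = q ∧ p = q + 1); omega)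
    have E3 := eval_zero n g g (fun p => p) (fun p => p + 1) (fun p => p + 1) (fun p => p)
      (fun p q => by show ¬(p = q + 1 ∧ p + 1 = q); omega)
    have E4 := eval_diag n g g (fun p => p) (fun p => p) (fun p => p + 1) (fun p => p + 1)
      (fun p q => by show (p = q ∧ p + 1 = q + 1) ↔ p = q; omega)
    simp only [] at P1 P2 P3 P4 E1 E2 E3 E4
    rw [P1, P2, P3, P4, E1, E2, E3, E4]
    have : ∑ p ∈ Finset.range n, g p * g p = ∑ x ∈ Finset.range n, g x ^ 2 :=
      Finset.sum_congr rfl fun p _ => (pow_two (g p)).symm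
    rw [this]
    ring
  -- Conclusion.
  calc 2 * CC⁻¹ * ∑ x ∈ Finset.range n, (f (x + 1) - f x) ^ 2
      = CC⁻¹ * (2 * ∑ x ∈ Finset.range n, (f (x + 1) - f x) ^ 2) := by ring
    _ = CC⁻¹ * ∑ j ∈ Finset.range (n + 1), ∑ j' ∈ Finset.range (n + 1),
          (∑ x ∈ Finset.range n, (f (x + 1) - f x) *
            (psiN n j (x + 1) * psiN n j' x - psiN n j x * psiN n j' (x + 1))) ^ 2 := by
        rw [hD]
    _ = ∑ j ∈ Finset.range (n + 1), ∑ j' ∈ Finset.range (n + 1),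
          CC⁻¹ * ((μ j - μ j') *
            (∑ x ∈ Finset.range (n + 1), psiN n j x * psiN n j' x * f x)) ^ 2 := by
        rw [Finset.mul_sum]
        refine Finset.sum_congr rfl fun j _ => ?_
        rw [Finset.mul_sum]
        exact Finset.sum_congr rfl fun j' _ => by rw [hC j j']
    _ ≤ ∑ j ∈ Finset.range (n + 1), ∑ j' ∈ Finset.range (n + 1),
          (1 - thetaK γ (μ j) (μ j')) *
            (∑ x ∈ Finset.range (n + 1), psiN n j x * psiN n j' x * f x) ^ 2 :=
        Finset.sum_le_sum fun j _ => Finset.sum_le_sum fun j' _ => hB j j'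
    _ = ∑ x ∈ Finset.range (n + 1), ∑ y ∈ Finset.range (n + 1),
          ((if x = y then 1 else 0) - kerM n ω₀ γ x y) * f x * f y := hA.symm

end
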